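/- The minimal edge cost sequence C_k is strictly increasing, and satisfies C_{k+1} - C_k ∈ {1, 2} for all k ≥ 1, with C_{k+1} - C_k = 2 if and only if the minimal graph realizing C_k is a complete graph, i.e., if and only if k is of the form m(m-1)/2 - m + 1 for some m ≥ 3. -/

import Mathlib

open SimpleGraph Finset

-- construction: for 1 ≤ n, m ≤ n.choose 2, n ≤ m+1, there is a connected graph on Fin n with m edges
lemma construct (n m : ℕ) (hn : 1 ≤ n) (hm : m ≤ n.choose 2) (hnm : n ≤ m + 1) :
    ∃ (G : SimpleGraph (Fin n)) (_ : Fintype G.edgeSet),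
      G.Connected ∧ G.edgeFinset.card = m := by
  haveI : NeZero n := ⟨by omega⟩
  classical
  -- star edges
  set star : Finset (Sym2 (Fin n)) :=
    (Finset.univ.erase (0 : Fin n)).image (fun j => s(0, j)) with hstar
  have hinj : Function.Injective (fun j : Fin n => s(0, j)) := by
    intro a b hab
    simp only [Sym2.eq_iff] at hab
    rcases hab with ⟨-, h⟩ | ⟨h1, h2⟩
    · exact h
    · rw [← h1, h2]
  have hstarcard : star.card = n - 1 := by
    rw [hstar, Finset.card_image_of_injective _ hinj, Finset.card_erase_of_mem (mem_univ _),
      Finset.card_univ, Fintype.card_fin]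
  -- the rest
  set rest : Finset (Sym2 (Fin n)) :=
    Finset.univ.filter (fun e => ¬ e.IsDiag ∧ (0 : Fin n) ∉ e) with hrest
  have hsplit : star ∪ rest = Finset.univ.filter (fun e : Sym2 (Fin n) => ¬ e.IsDiag) := by
    ext e
    induction e
    next x y =>
      simp only [hstar, hrest, Finset.mem_union, Finset.mem_image, Finset.mem_erase,
        Finset.mem_filter, Finset.mem_univ, true_and, Sym2.isDiag_iff_proj_eq, Sym2.mem_iff]
      constructor
      · rintro (⟨j, hj, heq⟩ | ⟨h1, h2⟩)
        · rw [Sym2.eq_iff] at heq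
          intro h
          rcases heq with ⟨rfl, rfl⟩ | ⟨rfl, rfl⟩
          · exact hj.1 h.symm
          · exact hj.1 h
        · exact h1
      · intro hxy
        by_cases h0 : x = 0 ∨ y = 0
        · left
          rcases h0 with rfl | rfl
          · exact ⟨y, ⟨fun h => hxy h.symm, trivial⟩, rfl⟩
          · exact ⟨x, ⟨fun h => hxy h, trivial⟩, Sym2.eq_swap⟩
        · right
          push_neg at h0
          refine ⟨hxy, ?_⟩
          rintro (h | h) <;> [exact h0.1 h.symm; exact h0.2 h.symm]
  have hdisj : Disjoint star rest := by
    rw [Finset.disjoint_left]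
    intro e he1 he2
    simp only [hstar, Finset.mem_image] at he1
    obtain ⟨j, -, rfl⟩ := he1
    simp only [hrest, Finset.mem_filter] at he2
    exact he2.2.2 (Sym2.mem_mk_left 0 j)
  have htot : (Finset.univ.filter (fun e : Sym2 (Fin n) => ¬ e.IsDiag)).card = n.choose 2 := by
    have := SimpleGraph.card_edgeFinset_top_eq_card_choose_two (V := Fin n)
    rw [Fintype.card_fin] at this
    rw [← this]
    congr 1
    ext e
    simp [SimpleGraph.mem_edgeFinset]
  have hrestcard : (n - 1) + rest.card = n.choose 2 := by
    rw [← hstarcard, ← Finset.card_union_of_disjoint hdisj, hsplit, htot]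
  have hle : m - (n - 1) ≤ rest.card := by omega
  obtain ⟨t, ht, htcard⟩ := Finset.exists_subset_card_eq hle
  set E : Finset (Sym2 (Fin n)) := star ∪ t with hE
  have hEcard : E.card = m := by
    rw [hE, Finset.card_union_of_disjoint (hdisj.mono_right ht), hstarcard, htcard]
    omega
  have hEnodiag : ∀ e ∈ E, ¬ e.IsDiag := by
    intro e he
    rcases Finset.mem_union.mp he with h | h
    · simp only [hstar, Finset.mem_image, Finset.mem_erase] at h
      obtain ⟨j, ⟨hj, -⟩, heq⟩ := h
      rw [← heq]
      simp only [Sym2.isDiag_iff_proj_eq]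
      exact fun h => hj h.symm
    · have := ht h
      simp only [hrest, Finset.mem_filter] at this
      exact this.2.1
  have hEset : (SimpleGraph.fromEdgeSet (↑E : Set (Sym2 (Fin n)))).edgeSet = ↑E := by
    rw [SimpleGraph.edgeSet_fromEdgeSet]
    ext e
    simp only [Set.mem_diff, Set.mem_setOf_eq, Finset.mem_coe]
    exact ⟨fun h => h.1, fun h => ⟨h, hEnodiag e h⟩⟩
  refine ⟨SimpleGraph.fromEdgeSet ↑E, inferInstance, ?_, ?_⟩
  · -- connected
    have hreach : ∀ v : Fin n, (SimpleGraph.fromEdgeSet (↑E : Set (Sym2 (Fin n)))).Reachable 0 v := by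
      intro v
      by_cases hv : v = 0
      · rw [hv]
      · apply SimpleGraph.Adj.reachable
        rw [SimpleGraph.fromEdgeSet_adj]
        refine ⟨?_, fun h => hv h.symm⟩
        simp only [Finset.mem_coe, hE, Finset.mem_union]
        left
        rw [hstar]
        exact Finset.mem_image.mpr ⟨v, Finset.mem_erase.mpr ⟨hv, Finset.mem_univ v⟩, rfl⟩
    exact ⟨fun u v => (hreach u).symm.trans (hreach v)⟩
  · -- edge count
    rw [SimpleGraph.edgeFinset_card, ← hEcard, ← Fintype.card_coe E]
    exact Fintype.card_congr (Equiv.setCongr hEset)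

/-- `EdgeCount m k` says there is a connected finite simple graph with `m` edges
and cycle rank `|E| - |V| + 1 = k` (expressed as `m + 1 = N + k`). -/
def EdgeCount (m k : ℕ) : Prop :=
  ∃ (N : ℕ) (G : SimpleGraph (Fin N)) (_ : Fintype G.edgeSet),
    G.Connected ∧ G.edgeFinset.card = m ∧ m + 1 = N + k

/-- `Cmin k` is the minimal number of edges of a connected simple graph with cycle rank `k`. -/
noncomputable def Cmin (k : ℕ) : ℕ := sInf {m | EdgeCount m k}

lemma choose2_succ (j : ℕ) : (j + 1).choose 2 = j.choose 2 + j := by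
  rw [Nat.choose_succ_succ]
  simp [Nat.choose_one_right, Nat.add_comm]

lemma edgeCount_iff (m k : ℕ) : EdgeCount m k ↔ k ≤ m ∧ k ≤ (m - k).choose 2 := by
  constructor
  · rintro ⟨N, G, inst, hconn, hcard, hsum⟩
    have hN : 1 ≤ N := Fin.pos_iff_nonempty.mpr hconn.nonempty
    have hle : m ≤ N.choose 2 := by
      have h := SimpleGraph.card_edgeFinset_le_card_choose_two (G := G)
      rwa [hcard, Fintype.card_fin] at h
    obtain ⟨j, rfl⟩ : ∃ j, N = j + 1 := ⟨N - 1, by omega⟩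
    have hps := choose2_succ j
    have hmk : m - k = j := by omega
    rw [hmk]
    omega
  · rintro ⟨h1, h2⟩
    have hps := choose2_succ (m - k)
    obtain ⟨G, inst, hconn, hcard⟩ :=
      construct (m - k + 1) m (by omega) (by omega) (by omega)
    exact ⟨m - k + 1, G, inst, hconn, hcard, by omega⟩

/-- the auxiliary minimum: least `j` with `j.choose 2 ≥ k` -/
noncomputable def gmin (k : ℕ) : ℕ := sInf {j : ℕ | k ≤ j.choose 2}

lemma gmin_nonempty (k : ℕ) : {j : ℕ | k ≤ j.choose 2}.Nonempty := by
  refine ⟨k + 1, ?_⟩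
  have h := choose2_succ k
  have : k ≤ k.choose 2 + k := by omega
  simpa [Set.mem_setOf_eq, h]

lemma gmin_mem (k : ℕ) : k ≤ (gmin k).choose 2 := Nat.sInf_mem (gmin_nonempty k)

lemma gmin_le {k j : ℕ} (h : k ≤ j.choose 2) : gmin k ≤ j := Nat.sInf_le h

lemma le_gmin {k j : ℕ} (h : ∀ i, k ≤ i.choose 2 → j ≤ i) : j ≤ gmin k :=
  h _ (gmin_mem k)

lemma cmin_eq (k : ℕ) : Cmin k = k + gmin k := by
  have hmem : EdgeCount (k + gmin k) k := by
    rw [edgeCount_iff]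
    constructor
    · omega
    · simpa using gmin_mem k
  apply le_antisymm
  · exact Nat.sInf_le hmem
  · refine le_csInf ⟨k + gmin k, hmem⟩ ?_
    intro m hm
    rw [Set.mem_setOf_eq, edgeCount_iff] at hm
    have := gmin_le hm.2
    omega

lemma gmin_mono : Monotone gmin := by
  intro a b hab
  exact gmin_le (le_trans hab (gmin_mem b))

lemma gmin_two_le {k : ℕ} (hk : 1 ≤ k) : 2 ≤ gmin k := by
  apply le_gmin
  intro i hi
  by_contra h
  interval_cases i <;> simp_all [Nat.choose]

lemma gmin_succ_le (k : ℕ) (hk : 1 ≤ k) : gmin (k + 1) ≤ gmin k + 1 := by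
  apply gmin_le
  rw [choose2_succ]
  have h1 := gmin_mem k
  have h2 := gmin_two_le hk
  omega

theorem stmt_8 :
    StrictMono Cmin ∧
      ∀ k : ℕ, 1 ≤ k →
        (Cmin (k + 1) = Cmin k + 1 ∨ Cmin (k + 1) = Cmin k + 2) ∧
          (Cmin (k + 1) = Cmin k + 2 ↔ ∃ m : ℕ, 3 ≤ m ∧ k = m * (m - 1) / 2 - m + 1) := by
  constructor
  · apply strictMono_nat_of_lt_succ
    intro k
    have := gmin_mono (Nat.le_add_right k 1)
    rw [cmin_eq, cmin_eq]
    omega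
  · intro k hk
    have h1 := gmin_mono (Nat.le_add_right k 1)
    have h2 := gmin_succ_le k hk
    have h3 := gmin_two_le hk
    have key : Cmin (k + 1) = Cmin k + 2 ↔ gmin (k + 1) = gmin k + 1 := by
      rw [cmin_eq, cmin_eq]; omega
    refine ⟨by rw [cmin_eq, cmin_eq]; omega, ?_⟩
    rw [key]
    constructor
    · intro hg
      refine ⟨gmin k + 1, by omega, ?_⟩
      have hck : (gmin k).choose 2 = k := by
        have hge := gmin_mem k
        by_contra hne
        have hlt : k + 1 ≤ (gmin k).choose 2 := by omega
        have := gmin_le hlt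
        omega
      have hdiv : (gmin k + 1) * (gmin k + 1 - 1) / 2 = k + gmin k := by
        rw [← Nat.choose_two_right, choose2_succ, hck]
      rw [hdiv]
      omega
    · rintro ⟨m, hm3, hmk⟩
      obtain ⟨j, rfl⟩ : ∃ j, m = j + 1 := ⟨m - 1, by omega⟩
      have hj2 : 2 ≤ j := by omega
      have hch : (j + 1) * (j + 1 - 1) / 2 = j.choose 2 + j := by
        rw [← Nat.choose_two_right, choose2_succ]
      rw [hch] at hmk
      have hone : 1 ≤ j.choose 2 := by
        have h := Nat.choose_le_choose 2 hj2
        simpa using h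
      have hkj : k = j.choose 2 := by omega
      have hg : gmin k = j := by
        refine le_antisymm (gmin_le (le_of_eq hkj)) (le_gmin fun i hi => ?_)
        by_contra hlt
        push_neg at hlt
        have hmono : i.choose 2 ≤ (j - 1).choose 2 := Nat.choose_le_choose 2 (by omega)
        have hsub : (j - 1).choose 2 + (j - 1) = j.choose 2 := by
          obtain ⟨p, rfl⟩ : ∃ p, j = p + 1 := ⟨j - 1, by omega⟩
          simpa using (choose2_succ p).symm
        omega
      have hup : gmin k + 1 ≤ gmin (k + 1) := by
        by_contra hle
        push_neg at hle
        have hm1 := gmin_mem (k + 1)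
        have hmono : (gmin (k + 1)).choose 2 ≤ (gmin k).choose 2 :=
          Nat.choose_le_choose 2 (by omega)
        rw [hg, ← hkj] at hmono
        omega
      omega
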